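/- Consider the linear ODE system a'(t) = (λ m) a₋(t), a₋'(t) = −(λ m) a(t) together with c'(t) − m c₋(t) = a(t), c₋'(t) + m c(t) = a₋(t), where λ = (ℓ+2)/(ℓ+1) and m ≠ 0, ℓ ≥ 1 real parameters. The unique solution with c(0) = c₋(0) = 0 satisfies c(t) = (2(ℓ+1)/m) sin(mt/(2(ℓ+1))) [a(0) cos((2ℓ+3)mt/(2(ℓ+1))) + a₋(0) sin((2ℓ+3)mt/(2(ℓ+1)))]. In particular c(t) = c₋(t) = 0 at the times t = 4kπ(ℓ+1)/m for all integers k. -/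

import Mathlib

open Real

/-- The Jacobi-field block system: a' = λm a₋, a₋' = −λm a, c' − m c₋ = a,
c₋' + m c = a₋ with λ = (ℓ+2)/(ℓ+1).  The solution with c(0) = c₋(0) = 0 is
given by an explicit formula, vanishing at t = 4kπ(ℓ+1)/m. -/
theorem jacobi_block_solution
    (ℓ m : ℝ) (hℓ : 1 ≤ ℓ) (hm : m ≠ 0)
    (a aneg c cneg : ℝ → ℝ)
    (ha : ∀ t, HasDerivAt a ((ℓ + 2) / (ℓ + 1) * m * aneg t) t)
    (haneg : ∀ t, HasDerivAt aneg (-((ℓ + 2) / (ℓ + 1) * m) * a t) t)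
    (hc : ∀ t, HasDerivAt c (m * cneg t + a t) t)
    (hcneg : ∀ t, HasDerivAt cneg (-(m * c t) + aneg t) t)
    (hc0 : c 0 = 0) (hcneg0 : cneg 0 = 0) :
    (∀ t, c t = 2 * (ℓ + 1) / m * sin (m * t / (2 * (ℓ + 1))) *
        (a 0 * cos ((2 * ℓ + 3) * m * t / (2 * (ℓ + 1))) +
         aneg 0 * sin ((2 * ℓ + 3) * m * t / (2 * (ℓ + 1))))) ∧
    (∀ k : ℤ, c (4 * k * π * (ℓ + 1) / m) = 0 ∧ cneg (4 * k * π * (ℓ + 1) / m) = 0) := by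
  have hℓ1 : (ℓ + 1) ≠ 0 := by nlinarith
  set ω : ℝ := (ℓ + 2) / (ℓ + 1) * m with hωdef
  set μ : ℝ := m / (2 * (ℓ + 1)) with hμdef
  set ν : ℝ := (2 * ℓ + 3) * m / (2 * (ℓ + 1)) with hνdef
  set K : ℝ := 2 * (ℓ + 1) / m with hKdef
  have hμν : μ + ν = ω := by rw [hμdef, hνdef, hωdef]; field_simp; ring
  set A : ℝ → ℝ := fun t => a 0 * cos (ω * t) + aneg 0 * sin (ω * t) with hAdef
  set An : ℝ → ℝ := fun t => aneg 0 * cos (ω * t) - a 0 * sin (ω * t) with hAndef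
  set C : ℝ → ℝ := fun t => K * sin (μ * t) * (a 0 * cos (ν * t) + aneg 0 * sin (ν * t))
    with hCdef
  set Cn : ℝ → ℝ := fun t => K * sin (μ * t) * (aneg 0 * cos (ν * t) - a 0 * sin (ν * t))
    with hCndef
  -- derivatives of the candidate solutions
  have hωt : ∀ t : ℝ, HasDerivAt (fun t : ℝ => ω * t) ω t := fun t => by
    simpa using (hasDerivAt_id t).const_mul ω
  have hμt : ∀ t : ℝ, HasDerivAt (fun t : ℝ => μ * t) μ t := fun t => by
    simpa using (hasDerivAt_id t).const_mul μ
  have hνt : ∀ t : ℝ, HasDerivAt (fun t : ℝ => ν * t) ν t := fun t => by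
    simpa using (hasDerivAt_id t).const_mul ν
  have hdA : ∀ t, HasDerivAt A (ω * An t) t := by
    intro t
    have := (((hωt t).cos.const_mul (a 0)).add ((hωt t).sin.const_mul (aneg 0)))
    refine this.congr_deriv ?_
    simp only [hAndef]; ring
  have hdAn : ∀ t, HasDerivAt An (-ω * A t) t := by
    intro t
    have := (((hωt t).cos.const_mul (aneg 0)).sub ((hωt t).sin.const_mul (a 0)))
    refine this.congr_deriv ?_
    simp only [hAdef]; ring
  have hdC : ∀ t, HasDerivAt C (m * Cn t + A t) t := by
    intro t
    have hf : HasDerivAt (fun t => K * sin (μ * t)) (K * (cos (μ * t) * μ)) t :=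
      (hμt t).sin.const_mul K
    have hg : HasDerivAt (fun t => a 0 * cos (ν * t) + aneg 0 * sin (ν * t))
        (a 0 * (-sin (ν * t) * ν) + aneg 0 * (cos (ν * t) * ν)) t :=
      ((hνt t).cos.const_mul (a 0)).add ((hνt t).sin.const_mul (aneg 0))
    have := hf.mul hg
    refine this.congr_deriv ?_
    simp only [hAdef, hCndef]
    rw [show ω * t = μ * t + ν * t by rw [← hμν]; ring, cos_add, sin_add,
      hμdef, hνdef, hKdef]
    field_simp
    ring
  have hdCn : ∀ t, HasDerivAt Cn (-(m * C t) + An t) t := by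
    intro t
    have hf : HasDerivAt (fun t => K * sin (μ * t)) (K * (cos (μ * t) * μ)) t :=
      (hμt t).sin.const_mul K
    have hg : HasDerivAt (fun t => aneg 0 * cos (ν * t) - a 0 * sin (ν * t))
        (aneg 0 * (-sin (ν * t) * ν) - a 0 * (cos (ν * t) * ν)) t :=
      ((hνt t).cos.const_mul (aneg 0)).sub ((hνt t).sin.const_mul (a 0))
    have := hf.mul hg
    refine this.congr_deriv ?_
    simp only [hAndef, hCdef]
    rw [show ω * t = μ * t + ν * t by rw [← hμν]; ring, cos_add, sin_add,
      hμdef, hνdef, hKdef]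
    field_simp
    ring
  -- uniqueness for (a, aneg)
  set u : ℝ → ℝ := fun t => a t - A t with hudef
  set v : ℝ → ℝ := fun t => aneg t - An t with hvdef
  have hdu : ∀ t, HasDerivAt u (ω * v t) t := by
    intro t
    have := (ha t).sub (hdA t)
    refine this.congr_deriv ?_
    simp only [hvdef]; rw [hωdef]; ring
  have hdv : ∀ t, HasDerivAt v (-ω * u t) t := by
    intro t
    have := (haneg t).sub (hdAn t)
    refine this.congr_deriv ?_
    simp only [hudef]; rw [hωdef]; ring
  have hE : ∀ t : ℝ, HasDerivAt (fun t => u t ^ 2 + v t ^ 2) 0 t := by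
    intro t
    have := ((hdu t).pow 2).add ((hdv t).pow 2)
    refine this.congr_deriv ?_
    push_cast
    ring
  have hEconst : ∀ t : ℝ, u t ^ 2 + v t ^ 2 = 0 := by
    intro t
    have h0 : u 0 ^ 2 + v 0 ^ 2 = 0 := by
      simp only [hudef, hvdef, hAdef, hAndef]
      norm_num
    have := is_const_of_deriv_eq_zero (f := fun t => u t ^ 2 + v t ^ 2)
      (fun x => (hE x).differentiableAt) (fun x => (hE x).deriv) t 0
    rw [this, h0]
  have hu0 : ∀ t, u t = 0 := fun t => by nlinarith [hEconst t, sq_nonneg (u t), sq_nonneg (v t)]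
  have hv0 : ∀ t, v t = 0 := fun t => by nlinarith [hEconst t, sq_nonneg (u t), sq_nonneg (v t)]
  -- uniqueness for (c, cneg)
  set p : ℝ → ℝ := fun t => c t - C t with hpdef
  set q : ℝ → ℝ := fun t => cneg t - Cn t with hqdef
  have hdp : ∀ t, HasDerivAt p (m * q t) t := by
    intro t
    have := (hc t).sub (hdC t)
    refine this.congr_deriv ?_
    have := hu0 t
    simp only [hudef] at this
    simp only [hqdef]; linarith [this]
  have hdq : ∀ t, HasDerivAt q (-m * p t) t := by
    intro t
    have := (hcneg t).sub (hdCn t)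
    refine this.congr_deriv ?_
    have := hv0 t
    simp only [hvdef] at this
    simp only [hpdef]; linarith [this]
  have hF : ∀ t : ℝ, HasDerivAt (fun t => p t ^ 2 + q t ^ 2) 0 t := by
    intro t
    have := ((hdp t).pow 2).add ((hdq t).pow 2)
    refine this.congr_deriv ?_
    push_cast
    ring
  have hFconst : ∀ t : ℝ, p t ^ 2 + q t ^ 2 = 0 := by
    intro t
    have h0 : p 0 ^ 2 + q 0 ^ 2 = 0 := by
      simp only [hpdef, hqdef, hCdef, hCndef, hc0, hcneg0]
      norm_num
    have := is_const_of_deriv_eq_zero (f := fun t => p t ^ 2 + q t ^ 2)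
      (fun x => (hF x).differentiableAt) (fun x => (hF x).deriv) t 0
    rw [this, h0]
  have hcC : ∀ t, c t = C t := by
    intro t
    have hp : p t = 0 := by
      nlinarith [hFconst t, sq_nonneg (p t), sq_nonneg (q t)]
    simp only [hpdef] at hp
    linarith
  have hcCn : ∀ t, cneg t = Cn t := by
    intro t
    have hq : q t = 0 := by
      nlinarith [hFconst t, sq_nonneg (p t), sq_nonneg (q t)]
    simp only [hqdef] at hq
    linarith
  constructor
  · intro t
    rw [hcC t, hCdef]
    show K * sin (μ * t) * (a 0 * cos (ν * t) + aneg 0 * sin (ν * t)) = _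
    rw [show μ * t = m * t / (2 * (ℓ + 1)) by rw [hμdef]; ring,
      show ν * t = (2 * ℓ + 3) * m * t / (2 * (ℓ + 1)) by rw [hνdef]; ring, hKdef]
  · intro k
    have hsin : sin (μ * (4 * k * π * (ℓ + 1) / m)) = 0 := by
      have h2 : μ * (4 * k * π * (ℓ + 1) / m) = (2 * k : ℤ) * π := by
        rw [hμdef]; push_cast; field_simp; ring
      rw [h2, Real.sin_int_mul_pi]
    constructor
    · rw [hcC, hCdef]; simp [hsin]
    · rw [hcCn, hCndef]; simp [hsin]
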